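/- If H is an n×n symmetric positive definite matrix, B is an n×m matrix of full column rank with m ≥ 1, and C is an m×m symmetric positive semidefinite matrix, then the saddle-point matrix K = [[H, B], [Bᵀ, -C]] is indefinite: it has both positive and negative eigenvalues (specifically, n positive and m negative eigenvalues). -/

import Mathlib

open Matrix

section aux

variable {N : Type*} [Fintype N] [DecidableEq N]

lemma quad_eigen {A : Matrix N N ℝ} (hA : A.IsHermitian) (x : N → ℝ) :
    x ⬝ᵥ A *ᵥ x =
      ∑ i, hA.eigenvalues i *
        ((star (hA.eigenvectorUnitary : Matrix N N ℝ)) *ᵥ x) i ^ 2 := by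
  set V : Matrix N N ℝ := (hA.eigenvectorUnitary : Matrix N N ℝ) with hVdef
  have hV : star V = Vᵀ := by
    ext i j
    simp [Matrix.star_eq_conjTranspose, Matrix.conjTranspose_apply]
  have hof : ((RCLike.ofReal ∘ hA.eigenvalues : N → ℝ)) = hA.eigenvalues := by
    ext i; simp
  conv_lhs => rw [hA.spectral_theorem, Unitary.conjStarAlgAut_apply]
  rw [← hVdef, hof, ← mulVec_mulVec, ← mulVec_mulVec, dotProduct_mulVec]
  have hx : x ᵥ* V = star V *ᵥ x := by rw [hV, mulVec_transpose]
  rw [hx]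
  simp only [dotProduct, mulVec_diagonal]
  refine Finset.sum_congr rfl fun i _ => by ring

lemma count_ge_of_pos {A : Matrix N N ℝ} (hA : A.IsHermitian)
    {k : ℕ} (f : (Fin k → ℝ) →ₗ[ℝ] (N → ℝ))
    (hf : ∀ v : Fin k → ℝ, v ≠ 0 → 0 < f v ⬝ᵥ A *ᵥ f v) :
    k ≤ (Finset.univ.filter fun i => 0 < hA.eigenvalues i).card := by
  by_contra hlt
  push_neg at hlt
  set V : Matrix N N ℝ := (hA.eigenvectorUnitary : Matrix N N ℝ) with hVdef
  have hcard : Fintype.card {i : N // 0 < hA.eigenvalues i}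
      = (Finset.univ.filter fun i => 0 < hA.eigenvalues i).card :=
    Fintype.card_subtype _
  set g : (Fin k → ℝ) →ₗ[ℝ] ({i : N // 0 < hA.eigenvalues i} → ℝ) :=
    (LinearMap.funLeft ℝ ℝ (Subtype.val)).comp ((star V).mulVecLin.comp f) with hg
  have hginj : ¬ Function.Injective g := by
    intro hinj
    have h1 := LinearMap.finrank_le_finrank_of_injective hinj
    rw [Module.finrank_pi, Module.finrank_pi] at h1
    simp only [Fintype.card_fin] at h1
    omega
  rw [Function.not_injective_iff] at hginj
  obtain ⟨a, b, hab, hne⟩ := hginj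
  have hv0 : a - b ≠ 0 := sub_ne_zero.mpr hne
  have hgv : g (a - b) = 0 := by rw [map_sub, hab, sub_self]
  have hc : ∀ i : N, 0 < hA.eigenvalues i → (star V *ᵥ f (a - b)) i = 0 := by
    intro i hi
    have := congrFun hgv ⟨i, hi⟩
    simpa [hg] using this
  have hpos := hf (a - b) hv0
  rw [quad_eigen hA] at hpos
  have hle : (∑ i, hA.eigenvalues i * ((star V) *ᵥ f (a - b)) i ^ 2) ≤ 0 := by
    refine Finset.sum_nonpos fun i _ => ?_
    by_cases hi : 0 < hA.eigenvalues i
    · rw [hc i hi]; simp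
    · push_neg at hi
      have := sq_nonneg (((star V) *ᵥ f (a - b)) i)
      nlinarith
  rw [← hVdef] at hpos
  linarith

lemma count_ge_of_neg {A : Matrix N N ℝ} (hA : A.IsHermitian)
    {k : ℕ} (f : (Fin k → ℝ) →ₗ[ℝ] (N → ℝ))
    (hf : ∀ v : Fin k → ℝ, v ≠ 0 → f v ⬝ᵥ A *ᵥ f v < 0) :
    k ≤ (Finset.univ.filter fun i => hA.eigenvalues i < 0).card := by
  by_contra hlt
  push_neg at hlt
  set V : Matrix N N ℝ := (hA.eigenvectorUnitary : Matrix N N ℝ) with hVdef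
  have hcard : Fintype.card {i : N // hA.eigenvalues i < 0}
      = (Finset.univ.filter fun i => hA.eigenvalues i < 0).card :=
    Fintype.card_subtype _
  set g : (Fin k → ℝ) →ₗ[ℝ] ({i : N // hA.eigenvalues i < 0} → ℝ) :=
    (LinearMap.funLeft ℝ ℝ (Subtype.val)).comp ((star V).mulVecLin.comp f) with hg
  have hginj : ¬ Function.Injective g := by
    intro hinj
    have h1 := LinearMap.finrank_le_finrank_of_injective hinj
    rw [Module.finrank_pi, Module.finrank_pi] at h1
    simp only [Fintype.card_fin] at h1
    omega
  rw [Function.not_injective_iff] at hginj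
  obtain ⟨a, b, hab, hne⟩ := hginj
  have hv0 : a - b ≠ 0 := sub_ne_zero.mpr hne
  have hgv : g (a - b) = 0 := by rw [map_sub, hab, sub_self]
  have hc : ∀ i : N, hA.eigenvalues i < 0 → (star V *ᵥ f (a - b)) i = 0 := by
    intro i hi
    have := congrFun hgv ⟨i, hi⟩
    simpa [hg] using this
  have hneg := hf (a - b) hv0
  rw [quad_eigen hA] at hneg
  have hle : (0 : ℝ) ≤ ∑ i, hA.eigenvalues i * ((star V) *ᵥ f (a - b)) i ^ 2 := by
    refine Finset.sum_nonneg fun i _ => ?_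
    by_cases hi : hA.eigenvalues i < 0
    · rw [hc i hi]; simp
    · push_neg at hi
      positivity
  rw [← hVdef] at hneg
  linarith

end aux

/-- The saddle-point matrix `K = [[H, B], [Bᵀ, -C]]` with `H` symmetric positive definite,
`B` of full column rank and `C` symmetric positive semidefinite is indefinite: there are
vectors `x`, `y` with `xᵀKx > 0` and `yᵀKy < 0`, and it has exactly `n` positive and `m`
negative eigenvalues. -/
theorem saddle_point_indefinite {n m : ℕ} (hm : 1 ≤ m)
    (H : Matrix (Fin n) (Fin n) ℝ) (B : Matrix (Fin n) (Fin m) ℝ)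
    (C : Matrix (Fin m) (Fin m) ℝ)
    (hH : H.PosDef) (hHsymm : Hᵀ = H)
    (hB : B.rank = m)
    (hC : C.PosSemidef) (hCsymm : Cᵀ = C)
    (hK : (Matrix.fromBlocks H B Bᵀ (-C)).IsHermitian) :
    (∃ x : Fin n ⊕ Fin m → ℝ,
        0 < x ⬝ᵥ (Matrix.fromBlocks H B Bᵀ (-C)) *ᵥ x) ∧
    (∃ y : Fin n ⊕ Fin m → ℝ,
        y ⬝ᵥ (Matrix.fromBlocks H B Bᵀ (-C)) *ᵥ y < 0) ∧
    (Finset.univ.filter fun i => 0 < hK.eigenvalues i).card = n ∧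
    (Finset.univ.filter fun i => hK.eigenvalues i < 0).card = m := by
  classical
  have hn : 1 ≤ n := le_trans hm (hB ▸ (B.rank_le_card_height.trans (by simp)))
  -- B has trivial kernel
  have hBinj : ∀ y : Fin m → ℝ, y ≠ 0 → B *ᵥ y ≠ 0 := by
    intro y hy hBy
    have h1 := LinearMap.finrank_range_add_finrank_ker B.mulVecLin
    have h2 : Module.finrank ℝ (LinearMap.range B.mulVecLin) = m := hB
    rw [h2, Module.finrank_pi, Fintype.card_fin] at h1
    have hker : LinearMap.ker B.mulVecLin = ⊥ :=
      Submodule.finrank_eq_zero.mp (by omega)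
    have : y ∈ LinearMap.ker B.mulVecLin := by
      simp [LinearMap.mem_ker, mulVecLin_apply, hBy]
    rw [hker] at this
    exact hy (by simpa using this)
  have hHinv : H * H⁻¹ = 1 := mul_nonsing_inv _ hH.det_pos.ne'.isUnit
  have hHipd : H⁻¹.PosDef := hH.inv
  -- positive subspace
  let fpos : (Fin n → ℝ) →ₗ[ℝ] (Fin n ⊕ Fin m → ℝ) :=
    { toFun := fun x => Sum.elim x 0
      map_add' := fun a b => by ext (i | i) <;> simp
      map_smul' := fun c a => by ext (i | i) <;> simp }
  have hfpos : ∀ x : Fin n → ℝ, x ≠ 0 →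
      0 < fpos x ⬝ᵥ (Matrix.fromBlocks H B Bᵀ (-C)) *ᵥ fpos x := by
    intro x hx
    have h := hH.dotProduct_mulVec_pos hx
    have hval : fpos x ⬝ᵥ (Matrix.fromBlocks H B Bᵀ (-C)) *ᵥ fpos x = x ⬝ᵥ H *ᵥ x := by
      show (Sum.elim x 0) ⬝ᵥ (Matrix.fromBlocks H B Bᵀ (-C)) *ᵥ (Sum.elim x 0) = _
      rw [fromBlocks_mulVec, sumElim_dotProduct_sumElim]
      simp
    rw [hval]
    simpa using h
  -- negative subspace
  let fneg : (Fin m → ℝ) →ₗ[ℝ] (Fin n ⊕ Fin m → ℝ) :=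
    { toFun := fun y => Sum.elim (-(H⁻¹ *ᵥ (B *ᵥ y))) y
      map_add' := fun a b => by
        ext (i | i) <;> simp [mulVec_add] <;> ring
      map_smul' := fun c a => by
        ext (i | i) <;> simp [mulVec_smul] <;> ring }
  have hfneg : ∀ y : Fin m → ℝ, y ≠ 0 →
      fneg y ⬝ᵥ (Matrix.fromBlocks H B Bᵀ (-C)) *ᵥ fneg y < 0 := by
    intro y hy
    set a : Fin n → ℝ := -(H⁻¹ *ᵥ (B *ᵥ y)) with ha
    have hHa : H *ᵥ a = -(B *ᵥ y) := by
      rw [ha, mulVec_neg, mulVec_mulVec, mulVec_mulVec, hHinv, Matrix.one_mul]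
    have hval : fneg y ⬝ᵥ (Matrix.fromBlocks H B Bᵀ (-C)) *ᵥ fneg y
        = -((B *ᵥ y) ⬝ᵥ H⁻¹ *ᵥ (B *ᵥ y)) - y ⬝ᵥ C *ᵥ y := by
      show (Sum.elim a y) ⬝ᵥ (Matrix.fromBlocks H B Bᵀ (-C)) *ᵥ (Sum.elim a y) = _
      rw [fromBlocks_mulVec, sumElim_dotProduct_sumElim]
      simp only [Sum.elim_comp_inl, Sum.elim_comp_inr]
      rw [hHa]
      have h1 : a ⬝ᵥ (-(B *ᵥ y) + B *ᵥ y) = 0 := by simp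
      have h2 : y ⬝ᵥ (Bᵀ *ᵥ a + (-C) *ᵥ y)
          = (B *ᵥ y) ⬝ᵥ a - y ⬝ᵥ C *ᵥ y := by
        rw [dotProduct_add, dotProduct_mulVec y Bᵀ a, vecMul_transpose,
          Matrix.neg_mulVec, dotProduct_neg y (C *ᵥ y), sub_eq_add_neg]
      rw [h1, h2, ha, zero_add, dotProduct_neg (B *ᵥ y) (H⁻¹ *ᵥ (B *ᵥ y))]
    have hBy : B *ᵥ y ≠ 0 := hBinj y hy
    have h1 : 0 < (B *ᵥ y) ⬝ᵥ H⁻¹ *ᵥ (B *ᵥ y) := by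
      have := hHipd.dotProduct_mulVec_pos hBy
      simpa using this
    have h2 : 0 ≤ y ⬝ᵥ C *ᵥ y := by
      have := hC.dotProduct_mulVec_nonneg y
      simpa using this
    rw [hval]
    linarith
  have hp : n ≤ (Finset.univ.filter fun i => 0 < hK.eigenvalues i).card :=
    count_ge_of_pos hK fpos hfpos
  have hq : m ≤ (Finset.univ.filter fun i => hK.eigenvalues i < 0).card := by
    refine count_ge_of_neg hK fneg (fun y hy => hfneg y hy)
  have hsum : (Finset.univ.filter fun i => 0 < hK.eigenvalues i).card
      + (Finset.univ.filter fun i => hK.eigenvalues i < 0).card ≤ n + m := by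
    have hdisj : Disjoint (Finset.univ.filter fun i => 0 < hK.eigenvalues i)
        (Finset.univ.filter fun i => hK.eigenvalues i < 0) := by
      rw [Finset.disjoint_left]
      intro i hi1 hi2
      simp only [Finset.mem_filter] at hi1 hi2
      linarith [hi1.2, hi2.2]
    calc (Finset.univ.filter fun i => 0 < hK.eigenvalues i).card
          + (Finset.univ.filter fun i => hK.eigenvalues i < 0).card
        = ((Finset.univ.filter fun i => 0 < hK.eigenvalues i)
            ∪ (Finset.univ.filter fun i => hK.eigenvalues i < 0)).card :=
          (Finset.card_union_of_disjoint hdisj).symm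
      _ ≤ (Finset.univ : Finset (Fin n ⊕ Fin m)).card := Finset.card_le_card (Finset.subset_univ _)
      _ = n + m := by simp
  have hone_n : ((fun _ => 1 : Fin n → ℝ)) ≠ 0 := by
    intro h
    have := congrFun h ⟨0, hn⟩
    norm_num at this
  have hone_m : ((fun _ => 1 : Fin m → ℝ)) ≠ 0 := by
    intro h
    have := congrFun h ⟨0, hm⟩
    norm_num at this
  exact ⟨⟨fpos (fun _ => 1), hfpos _ hone_n⟩, ⟨fneg (fun _ => 1), hfneg _ hone_m⟩,
    by omega, by omega⟩
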